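/- arXiv:0805.2620 — 7 statements merged into one kernel-verified Lean document; each statement's English description precedes it below -/
import Mathlib

section
/- Let G be a finite game graph with Büchi states B, C = S \ B, C1 = { s ∈ S1 ∩ C | E(s) ⊆ C }, C2 = { s ∈ S2 ∩ C | E(s) ∩ C ≠ ∅ }, X = Attr2(C1 ∪ C2, G), and Z = X ∩ C. Then Tr ⊆ Z, where Tr = S \ Attr1(B,G). -/
open Classical

universe u

structure GameGraph (S : Type u) where
  E : S → Set S
  S1 : Set S
  succ_nonempty : ∀ s, (E s).Nonempty

namespace GameGraph

variable {S : Type u} (G : GameGraph S)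

/-- A (general, history-dependent) strategy: given a history and the current
state, choose a successor. -/
abbrev Strat := { f : List S → S → S // ∀ h s, f h s ∈ G.E s }

open Classical in
/-- The pair (history so far, current state) after `n` steps of the play from
`s` where player 1 uses `σ` (at states of `S1`) and player 2 uses `π`. -/
noncomputable def playPair (σ π : List S → S → S) (s : S) : ℕ → List S × S
  | 0 => ([], s)
  | n+1 =>
      let p := playPair σ π s n
      (p.1 ++ [p.2], if p.2 ∈ G.S1 then σ p.1 p.2 else π p.1 p.2)

/-- The unique play `ω(s,σ,π)`. -/
noncomputable def play (σ π : List S → S → S) (s : S) (n : ℕ) : S :=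
  (G.playPair σ π s n).2

/-- Lift a memoryless strategy to a general one. -/
def liftML (f : S → S) : List S → S → S := fun _ s => f s

def Reach (T : Set S) : Set (ℕ → S) := { ω | ∃ k, ω k ∈ T }

def Safe (F : Set S) : Set (ℕ → S) := { ω | ∀ k, ω k ∈ F }

/-- States occurring infinitely often in a play. -/
def InfOcc (ω : ℕ → S) : Set S := { t | ∀ N, ∃ k, N ≤ k ∧ ω k = t }

def Buchi (B : Set S) : Set (ℕ → S) := { ω | (InfOcc ω ∩ B).Nonempty }

def coBuchi (C : Set S) : Set (ℕ → S) := { ω | InfOcc ω ⊆ C }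

/-- Winning set of player 1 for objective `Φ`. -/
def W1 (Φ : Set (ℕ → S)) : Set S :=
  { s | ∃ σ : G.Strat, ∀ π : G.Strat, (G.play σ.1 π.1 s) ∈ Φ }

/-- Winning set of player 2 for objective `Ψ`. -/
def W2 (Ψ : Set (ℕ → S)) : Set S :=
  { s | ∃ π : G.Strat, ∀ σ : G.Strat, (G.play σ.1 π.1 s) ∈ Ψ }

/-- `U` is closed for player 1: player-1 states of `U` have all successors in
`U`, player-2 states of `U` have some successor in `U`. -/
def Closed1 (U : Set S) : Prop :=
  (∀ s ∈ U ∩ G.S1, G.E s ⊆ U) ∧ (∀ s ∈ U \ G.S1, (G.E s ∩ U).Nonempty)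

/-- `U` is closed for player 2. -/
def Closed2 (U : Set S) : Prop :=
  (∀ s ∈ U \ G.S1, G.E s ⊆ U) ∧ (∀ s ∈ U ∩ G.S1, (G.E s ∩ U).Nonempty)

/-- The inductive attractor sequence for player 1. -/
def AttrSeq1 (U : Set S) : ℕ → Set S
  | 0 => U
  | n+1 => AttrSeq1 U n
      ∪ { s | s ∈ G.S1 ∧ (G.E s ∩ AttrSeq1 U n).Nonempty }
      ∪ { s | s ∉ G.S1 ∧ G.E s ⊆ AttrSeq1 U n }

/-- Player-1 attractor of `U`. -/
def Attr1 (U : Set S) : Set S := ⋃ n, G.AttrSeq1 U n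

/-- The inductive attractor sequence for player 2. -/
def AttrSeq2 (U : Set S) : ℕ → Set S
  | 0 => U
  | n+1 => AttrSeq2 U n
      ∪ { s | s ∉ G.S1 ∧ (G.E s ∩ AttrSeq2 U n).Nonempty }
      ∪ { s | s ∈ G.S1 ∧ G.E s ⊆ AttrSeq2 U n }

/-- Player-2 attractor of `U`. -/
def Attr2 (U : Set S) : Set S := ⋃ n, G.AttrSeq2 U n

/-- Player-1 attractor sequence computed inside the region `X`
(i.e. in the restricted game `G ↾ X`). -/
def AttrSeq1In (X U : Set S) : ℕ → Set S
  | 0 => U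
  | n+1 => AttrSeq1In X U n
      ∪ { s | s ∈ X ∧ s ∈ G.S1 ∧ (G.E s ∩ AttrSeq1In X U n).Nonempty }
      ∪ { s | s ∈ X ∧ s ∉ G.S1 ∧ G.E s ∩ X ⊆ AttrSeq1In X U n }

/-- Player-1 attractor of `U` inside the region `X`. -/
def Attr1In (X U : Set S) : Set S := ⋃ n, G.AttrSeq1In X U n

/-- Player-2 attractor sequence computed inside the region `X`. -/
def AttrSeq2In (X U : Set S) : ℕ → Set S
  | 0 => U
  | n+1 => AttrSeq2In X U n
      ∪ { s | s ∈ X ∧ s ∉ G.S1 ∧ (G.E s ∩ AttrSeq2In X U n).Nonempty }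
      ∪ { s | s ∈ X ∧ s ∈ G.S1 ∧ G.E s ∩ X ⊆ AttrSeq2In X U n }

/-- Player-2 attractor of `U` inside the region `X`. -/
def Attr2In (X U : Set S) : Set S := ⋃ n, G.AttrSeq2In X U n

end GameGraph

open GameGraph

/-- `Tr ⊆ Z` where `Z = Attr2(C1 ∪ C2, G) ∩ C`. -/
theorem Tr_subset_Z {S : Type u} [Finite S] (G : GameGraph S) (B : Set S) :
    let C : Set S := Bᶜ
    let C1 : Set S := { s | s ∈ G.S1 ∧ s ∈ C ∧ G.E s ⊆ C }
    let C2 : Set S := { s | s ∉ G.S1 ∧ s ∈ C ∧ (G.E s ∩ C).Nonempty }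
    let X : Set S := G.Attr2 (C1 ∪ C2)
    let Z : Set S := X ∩ C
    (G.Attr1 B)ᶜ ⊆ Z := by
  intro C C1 C2 X Z
  -- basic facts about AttrSeq1
  have step : ∀ n, G.AttrSeq1 B n ⊆ G.AttrSeq1 B (n+1) := by
    intro n x hx
    exact Or.inl (Or.inl hx)
  have mono : ∀ m n, m ≤ n → G.AttrSeq1 B m ⊆ G.AttrSeq1 B n := by
    intro m n h
    induction n with
    | zero => simp_all
    | succ k ih =>
        rcases Nat.lt_or_ge m (k+1) with h' | h'
        · exact (ih (Nat.lt_succ_iff.mp h')).trans (step k)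
        · have : m = k + 1 := le_antisymm h h'
          subst this; exact subset_rfl
  have hB_sub : B ⊆ G.Attr1 B := fun t ht => Set.mem_iUnion.mpr ⟨0, ht⟩
  intro s hs
  have hsB : s ∉ B := fun h => hs (hB_sub h)
  -- s ∈ C1 ∪ C2
  have hmem : s ∈ C1 ∪ C2 := by
    by_cases hs1 : s ∈ G.S1
    · -- all successors outside Attr1 B
      left
      refine ⟨hs1, hsB, ?_⟩
      intro t ht htB
      apply hs
      have : t ∈ G.Attr1 B := hB_sub htB
      obtain ⟨n, hn⟩ := Set.mem_iUnion.mp this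
      exact Set.mem_iUnion.mpr ⟨n+1, Or.inl (Or.inr ⟨hs1, t, ht, hn⟩)⟩
    · right
      refine ⟨hs1, hsB, ?_⟩
      by_contra hne
      rw [Set.not_nonempty_iff_eq_empty] at hne
      have hall : ∀ t ∈ G.E s, t ∈ G.Attr1 B := by
        intro t ht
        apply hB_sub
        by_contra htB
        exact absurd (Set.eq_empty_iff_forall_notMem.mp hne t ⟨ht, htB⟩) (fun h => h)
      have hch : ∀ t : S, ∃ n, t ∈ G.Attr1 B → t ∈ G.AttrSeq1 B n := by
        intro t
        by_cases h : t ∈ G.Attr1 B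
        · obtain ⟨n, hn⟩ := Set.mem_iUnion.mp h
          exact ⟨n, fun _ => hn⟩
        · exact ⟨0, fun h' => absurd h' h⟩
      choose f hf using hch
      obtain ⟨N, hN⟩ := Finite.exists_le f
      have hsub : G.E s ⊆ G.AttrSeq1 B N := by
        intro t ht
        exact mono (f t) N (hN t) (hf t (hall t ht))
      exact hs (Set.mem_iUnion.mpr ⟨N+1, Or.inr ⟨hs1, hsub⟩⟩)
  exact ⟨Set.mem_iUnion.mpr ⟨0, hmem⟩, hsB⟩
end

section
/- Let G be a finite game graph with Büchi states B, C = S \ B, C1 = { s ∈ S1 ∩ C | E(s) ⊆ C }, C2 = { s ∈ S2 ∩ C | E(s) ∩ C ≠ ∅ }, X = Attr2(C1 ∪ C2, G), Z = X ∩ C, D = { s ∈ S1 ∩ Z | E(s) ∩ (S \ Z) ≠ ∅ } ∪ { s ∈ S2 ∩ Z | E(s) ⊆ S \ Z } ∪ (X \ Z), and L = Attr1(D, G restricted to X). Then Z \ L is contained in C and Z \ L is a closed set for player 1. -/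
open Classical

universe u

open GameGraph

lemma attrSeq1In_mono {S : Type u} (G : GameGraph S) (X U : Set S) :
    Monotone (G.AttrSeq1In X U) := by
  apply monotone_nat_of_le_succ
  intro n
  intro s hs
  exact Or.inl (Or.inl hs)

lemma finite_subset_iUnion {S : Type u} {f : ℕ → Set S} (hf : Monotone f)
    {T : Set S} (hT : T.Finite) (h : T ⊆ ⋃ n, f n) : ∃ n, T ⊆ f n := by
  revert h
  refine Set.Finite.induction_on (motive := fun T _ => T ⊆ ⋃ n, f n → ∃ n, T ⊆ f n) T hT (fun _ => ⟨0, Set.empty_subset _⟩) ?_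
  intro a T _ _ ih h
  obtain ⟨n, hn⟩ := ih (Set.Subset.trans (Set.subset_insert a T) h)
  obtain ⟨m, hm⟩ := Set.mem_iUnion.mp (h (Set.mem_insert a T))
  refine ⟨max n m, ?_⟩
  intro x hx
  rcases hx with rfl | hx
  · exact hf (le_max_right n m) hm
  · exact hf (le_max_left n m) (hn hx)

/-- `Z \ L` is contained in `C` and is a closed set for
player 1, where `L = Attr1(D, G ↾ X)`. -/
theorem ZdiffL_closed {S : Type u} [Finite S] (G : GameGraph S) (B : Set S) :
    let C : Set S := Bᶜ
    let C1 : Set S := { s | s ∈ G.S1 ∧ s ∈ C ∧ G.E s ⊆ C }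
    let C2 : Set S := { s | s ∉ G.S1 ∧ s ∈ C ∧ (G.E s ∩ C).Nonempty }
    let X : Set S := G.Attr2 (C1 ∪ C2)
    let Z : Set S := X ∩ C
    let D : Set S := { s | s ∈ G.S1 ∧ s ∈ Z ∧ (G.E s ∩ Zᶜ).Nonempty }
      ∪ { s | s ∉ G.S1 ∧ s ∈ Z ∧ G.E s ⊆ Zᶜ } ∪ (X \ Z)
    let L : Set S := G.Attr1In X D
    Z \ L ⊆ C ∧ G.Closed1 (Z \ L) := by
  intro C C1 C2 X Z D L
  have hDL : D ⊆ L := Set.subset_iUnion (G.AttrSeq1In X D) 0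
  have hstep : ∀ n, G.AttrSeq1In X D n ⊆ L :=
    fun n => Set.subset_iUnion (G.AttrSeq1In X D) n
  constructor
  · intro s hs
    exact hs.1.2
  constructor
  · -- player-1 states
    rintro s ⟨⟨hsZ, hsL⟩, hs1⟩ t ht
    have hsX : s ∈ X := hsZ.1
    -- t ∈ Z: otherwise s ∈ D ⊆ L
    have htZ : t ∈ Z := by
      by_contra htZ
      exact hsL (hDL (Or.inl (Or.inl ⟨hs1, hsZ, ⟨t, ht, htZ⟩⟩)))
    -- t ∉ L: otherwise s ∈ L
    refine ⟨htZ, fun htL => ?_⟩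
    obtain ⟨n, hn⟩ := Set.mem_iUnion.mp htL
    exact hsL (hstep (n+1) (Or.inl (Or.inr ⟨hsX, hs1, ⟨t, ht, hn⟩⟩)))
  · -- player-2 states
    rintro s ⟨⟨hsZ, hsL⟩, hs1⟩
    have hsX : s ∈ X := hsZ.1
    -- there is a successor in Z, else s ∈ D
    have hEZ : ¬ G.E s ⊆ Zᶜ := fun h =>
      hsL (hDL (Or.inl (Or.inr ⟨hs1, hsZ, h⟩)))
    by_contra hno
    push_neg at hno

    -- every successor in X is in L
    have hsub : G.E s ∩ X ⊆ L := by
      rintro t ⟨ht, htX⟩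
      by_cases htZ : t ∈ Z
      · by_contra htL
        have : t ∈ G.E s ∩ (Z \ L) := ⟨ht, htZ, htL⟩
        rw [hno] at this
        exact this
      · exact hDL (Or.inr ⟨htX, htZ⟩)
    have hfin : (G.E s ∩ X).Finite := Set.toFinite _
    obtain ⟨n, hn⟩ := finite_subset_iUnion (attrSeq1In_mono G X D) hfin hsub
    exact hsL (hstep (n+1) (Or.inr ⟨hsX, hs1, hn⟩))
end

section
/- With the notation of the alternative algorithm (C = S\B, C1, C2, X = Attr2(C1∪C2,G), Z = X∩C, D the one-step escape set from Z together with X\Z, L = Attr1(D, G↾X)), the set Tr = S \ Attr1(B,G) satisfies Tr ∩ L = ∅, and hence Tr ⊆ Z \ L. -/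
open Classical

universe u

open GameGraph

section Aux
variable {S : Type u}

lemma attrSeq1_mono (G : GameGraph S) (U : Set S) : Monotone (G.AttrSeq1 U) := by
  apply monotone_nat_of_le_succ
  intro n s hs
  exact Or.inl (Or.inl hs)

lemma fin_subset_iUnion {A : ℕ → Set S} (hA : Monotone A) {T : Set S} (hT : T.Finite) :
    T ⊆ (⋃ n, A n) → ∃ n, T ⊆ A n := by
  refine Set.Finite.induction_on T hT ?_ ?_
  · exact fun _ => ⟨0, by simp⟩
  · intro a s _ _ ih h
    obtain ⟨n1, hn1⟩ := ih (fun t ht => h (Set.mem_insert_of_mem a ht))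
    obtain ⟨n2, hn2⟩ := Set.mem_iUnion.mp (h (Set.mem_insert a s))
    refine ⟨max n1 n2, ?_⟩
    intro t ht
    rcases ht with rfl | ht
    · exact hA (le_max_right n1 n2) hn2
    · exact hA (le_max_left n1 n2) (hn1 ht)

end Aux

/-- `Tr ∩ L = ∅`, and hence `Tr ⊆ Z \ L`. -/
theorem Tr_disjoint_L {S : Type u} [Finite S] (G : GameGraph S) (B : Set S) :
    let C : Set S := Bᶜ
    let C1 : Set S := { s | s ∈ G.S1 ∧ s ∈ C ∧ G.E s ⊆ C }
    let C2 : Set S := { s | s ∉ G.S1 ∧ s ∈ C ∧ (G.E s ∩ C).Nonempty }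
    let X : Set S := G.Attr2 (C1 ∪ C2)
    let Z : Set S := X ∩ C
    let D : Set S := { s | s ∈ G.S1 ∧ s ∈ Z ∧ (G.E s ∩ Zᶜ).Nonempty }
      ∪ { s | s ∉ G.S1 ∧ s ∈ Z ∧ G.E s ⊆ Zᶜ } ∪ (X \ Z)
    let L : Set S := G.Attr1In X D
    (G.Attr1 B)ᶜ ∩ L = ∅ ∧ (G.Attr1 B)ᶜ ⊆ Z \ L := by
  intro C C1 C2 X Z D L
  set Tr : Set S := (G.Attr1 B)ᶜ with hTrdef
  have hTrC : Tr ⊆ C := by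
    intro s hs hB
    exact hs (Set.mem_iUnion.mpr ⟨0, hB⟩)
  have hcl1 : ∀ s ∈ Tr, s ∈ G.S1 → G.E s ⊆ Tr := by
    intro s hs h1 t ht htA
    obtain ⟨n, hn⟩ := Set.mem_iUnion.mp htA
    exact hs (Set.mem_iUnion.mpr ⟨n+1, Or.inl (Or.inr ⟨h1, t, ht, hn⟩)⟩)
  have hcl2 : ∀ s ∈ Tr, s ∉ G.S1 → (G.E s ∩ Tr).Nonempty := by
    intro s hs h1
    by_contra hne
    have hsub : G.E s ⊆ G.Attr1 B := by
      intro t ht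
      by_contra htn
      exact hne ⟨t, ht, htn⟩
    obtain ⟨n, hn⟩ := fin_subset_iUnion (attrSeq1_mono G B) (Set.toFinite _) hsub
    exact hs (Set.mem_iUnion.mpr ⟨n+1, Or.inr ⟨h1, hn⟩⟩)
  have hTrX : Tr ⊆ C1 ∪ C2 := by
    intro s hs
    by_cases h1 : s ∈ G.S1
    · exact Or.inl ⟨h1, hTrC hs, fun t ht => hTrC (hcl1 s hs h1 ht)⟩
    · obtain ⟨t, ht, htTr⟩ := hcl2 s hs h1
      exact Or.inr ⟨h1, hTrC hs, t, ht, hTrC htTr⟩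
  have hTrZ : Tr ⊆ Z := fun s hs => ⟨Set.mem_iUnion.mpr ⟨0, hTrX hs⟩, hTrC hs⟩
  have hD : ∀ s ∈ Tr, s ∉ D := by
    intro s hs hsD
    rcases hsD with (⟨h1, _, t, ht, htZ⟩ | ⟨h1, _, hsub⟩) | ⟨_, hnZ⟩
    · exact htZ (hTrZ (hcl1 s hs h1 ht))
    · obtain ⟨t, ht, htTr⟩ := hcl2 s hs h1
      exact hsub ht (hTrZ htTr)
    · exact hnZ (hTrZ hs)
  have hmain : ∀ n, ∀ s ∈ Tr, s ∉ G.AttrSeq1In X D n := by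
    intro n
    induction n with
    | zero => exact fun s hs => hD s hs
    | succ n ih =>
      intro s hs h
      rcases h with (h | ⟨_, h1, t, ht, htn⟩) | ⟨_, h1, hsub⟩
      · exact ih s hs h
      · exact ih t (hcl1 s hs h1 ht) htn
      · obtain ⟨t, ht, htTr⟩ := hcl2 s hs h1
        exact ih t htTr (hsub ⟨ht, (hTrZ htTr).1⟩)
  constructor
  · ext s
    simp only [Set.mem_inter_iff, Set.mem_empty_iff_false, iff_false, not_and]
    intro hs hL
    obtain ⟨n, hn⟩ := Set.mem_iUnion.mp hL
    exact hmain n s hs hn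
  · intro s hs
    refine ⟨hTrZ hs, fun hL => ?_⟩
    obtain ⟨n, hn⟩ := Set.mem_iUnion.mp hL
    exact hmain n s hs hn
end

section
/- Let G be a finite game graph and B ⊆ S. If W ⊆ W2(coBuchi(S\B)) and the play reaching aspect holds, then Attr2(W,G) ⊆ W2(coBuchi(S\B)): any state from which player 2 can force reaching a player-2 co-Büchi winning set is itself winning for player 2 for the co-Büchi objective. -/
open Classical

universe u

open GameGraph


lemma getD_append_map_lt {S : Type u} {ω : ℕ → S} {k : ℕ} (rest : List S) (d : S)
    {i : ℕ} (hi : i < k) :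
    (((List.range k).map ω) ++ rest).getD i d = ω i := by
  rw [List.getD_eq_getElem _ _ (by simp; omega)]
  rw [List.getElem_append_left (by simpa using hi)]
  simp

lemma getD_append_map_at {S : Type u} {ω' : ℕ → S} {m : ℕ} (pre : List S) (d : S)
    (hm : 0 < m) :
    (pre ++ (List.range m).map ω').getD pre.length d = ω' 0 := by
  rw [List.getD_eq_getElem _ _ (by simp; omega)]
  rw [List.getElem_append_right le_rfl]
  simp

section AttrAux

variable {S : Type u} (G : GameGraph S) (B W : Set S)

lemma attrSeq2_succ_mono (n : ℕ) : G.AttrSeq2 W n ⊆ G.AttrSeq2 W (n+1) := by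
  intro x hx
  exact Or.inl (Or.inl hx)

lemma attrSeq2_mono {m n : ℕ} (h : m ≤ n) : G.AttrSeq2 W m ⊆ G.AttrSeq2 W n := by
  induction n with
  | zero => simp_all
  | succ n ih =>
      rcases Nat.lt_or_ge m (n+1) with h' | h'
      · exact (ih (Nat.lt_succ_iff.mp h')).trans (attrSeq2_succ_mono G W n)
      · have : m = n + 1 := le_antisymm h h'
        subst this; exact subset_rfl

/-- Rank of a state in the attractor. -/
noncomputable def rnk (s : S) : ℕ :=
  if h : ∃ n, s ∈ G.AttrSeq2 W n then Nat.find h else 0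

lemma mem_rnk {s : S} (hs : s ∈ G.Attr2 W) : s ∈ G.AttrSeq2 W (rnk G W s) := by
  obtain ⟨n, hn⟩ := Set.mem_iUnion.mp hs
  have h : ∃ n, s ∈ G.AttrSeq2 W n := ⟨n, hn⟩
  rw [rnk, dif_pos h]
  exact Nat.find_spec h

lemma rnk_le {s : S} {n : ℕ} (h : s ∈ G.AttrSeq2 W n) : rnk G W s ≤ n := by
  have hex : ∃ m, s ∈ G.AttrSeq2 W m := ⟨n, h⟩
  rw [rnk, dif_pos hex]
  exact Nat.find_min' hex h

lemma rnk_ne_zero {s : S} (hs : s ∈ G.Attr2 W) (h : s ∉ W) : rnk G W s ≠ 0 := by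
  intro h0
  have := mem_rnk G W hs
  rw [h0] at this
  exact h this

lemma attr_step {s : S} (hs : s ∈ G.Attr2 W) (hsW : s ∉ W) :
    (s ∈ G.S1 → G.E s ⊆ G.AttrSeq2 W (rnk G W s - 1)) ∧
    (s ∉ G.S1 → (G.E s ∩ G.AttrSeq2 W (rnk G W s - 1)).Nonempty) := by
  have hmem := mem_rnk G W hs
  have hpos := rnk_ne_zero G W hs hsW
  obtain ⟨m, hm⟩ := Nat.exists_eq_succ_of_ne_zero hpos
  have hnot : s ∉ G.AttrSeq2 W m := by
    intro h
    have := rnk_le G W h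
    omega
  rw [hm] at hmem
  rw [hm, Nat.succ_sub_one]
  rcases hmem with (h | h) | h
  · exact absurd h hnot
  · exact ⟨fun h1 => absurd h1 h.1, fun _ => h.2⟩
  · exact ⟨fun _ => h.2, fun h1 => absurd h.1 h1⟩

/-- The attractor move for player 2. -/
noncomputable def attrMove (s : S) : S :=
  if h : (G.E s ∩ G.AttrSeq2 W (rnk G W s - 1)).Nonempty then h.choose
  else (G.succ_nonempty s).choose

lemma attrMove_mem (s : S) : attrMove G W s ∈ G.E s := by
  rw [attrMove]
  split
  · rename_i h
    exact h.choose_spec.1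
  · exact (G.succ_nonempty s).choose_spec

lemma attrMove_spec {s : S} (hA : s ∈ G.Attr2 W) (hsW : s ∉ W) (h1 : s ∉ G.S1) :
    attrMove G W s ∈ G.AttrSeq2 W (rnk G W s - 1) := by
  have h := (attr_step G W hA hsW).2 h1
  rw [attrMove, dif_pos h]
  exact h.choose_spec.2

/-- A winning strategy for player 2 from `t` (if any). -/
noncomputable def Fwin (t : S) : G.Strat :=
  if h : ∃ π : G.Strat, ∀ σ : G.Strat, G.play σ.1 π.1 t ∈ coBuchi Bᶜ then h.choose
  else ⟨fun _ s => (G.succ_nonempty s).choose, fun _ s => (G.succ_nonempty s).choose_spec⟩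

lemma Fwin_spec {t : S} (ht : t ∈ G.W2 (coBuchi Bᶜ)) :
    ∀ σ : G.Strat, G.play σ.1 (Fwin G B t).1 t ∈ coBuchi Bᶜ := by
  have h : ∃ π : G.Strat, ∀ σ : G.Strat, G.play σ.1 π.1 t ∈ coBuchi Bᶜ := ht
  rw [Fwin, dif_pos h]
  exact h.choose_spec

/-- The combined strategy: follow the attractor until the history contains a
state of `W`, then simulate a winning strategy from the first such state. -/
noncomputable def comb : List S → S → S := fun h s =>
  if hex : ∃ j, (h ++ [s]).getD j s ∈ W then
    (Fwin G B ((h ++ [s]).getD (Nat.find hex) s)).1 (h.drop (Nat.find hex)) s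
  else attrMove G W s

lemma comb_mem (h : List S) (s : S) : comb G B W h s ∈ G.E s := by
  rw [comb]
  split
  · exact (Fwin G B _).2 _ s
  · exact attrMove_mem G W s

lemma playPair_fst (σ π : List S → S → S) (s : S) (n : ℕ) :
    (G.playPair σ π s n).1 = (List.range n).map (G.play σ π s) := by
  induction n with
  | zero => simp [GameGraph.playPair]
  | succ n ih =>
      have : (G.playPair σ π s (n+1)).1
          = (G.playPair σ π s n).1 ++ [(G.playPair σ π s n).2] := rfl
      rw [this, ih, List.range_succ, List.map_append]
      rfl

lemma comb_reach (σ : G.Strat) {s : S} (hs : s ∈ G.Attr2 W) :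
    ∃ k, G.play σ.1 (comb G B W) s k ∈ W := by
  obtain ⟨n, hn⟩ := Set.mem_iUnion.mp hs
  set ω := G.play σ.1 (comb G B W) s with hω
  have inv : ∀ i, (∃ k ≤ i, ω k ∈ W) ∨ (ω i ∈ G.Attr2 W ∧ rnk G W (ω i) + i ≤ n) := by
    intro i
    induction i with
    | zero =>
        right
        have h0 : ω 0 = s := rfl
        rw [h0]
        exact ⟨hs, by simpa using rnk_le G W hn⟩
    | succ i ih =>
        rcases ih with ⟨k, hk, hkW⟩ | ⟨hA, hr⟩
        · exact Or.inl ⟨k, Nat.le_succ_of_le hk, hkW⟩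
        by_cases hWc : ∃ k ≤ i, ω k ∈ W
        · obtain ⟨k, hk, h'⟩ := hWc
          exact Or.inl ⟨k, hk.trans (Nat.le_succ i), h'⟩
        push_neg at hWc
        have hiW : ω i ∉ W := hWc i le_rfl
        have hrpos := rnk_ne_zero G W hA hiW
        have hsucc : ω (i+1) =
            if ω i ∈ G.S1 then σ.1 (G.playPair σ.1 (comb G B W) s i).1 (ω i)
            else comb G B W (G.playPair σ.1 (comb G B W) s i).1 (ω i) := rfl
        have key : ω (i+1) ∈ G.AttrSeq2 W (rnk G W (ω i) - 1) := by
          by_cases h1 : ω i ∈ G.S1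
          · rw [hsucc, if_pos h1]
            exact (attr_step G W hA hiW).1 h1 (σ.2 _ _)
          · rw [hsucc, if_neg h1]
            have hL : (G.playPair σ.1 (comb G B W) s i).1 ++ [ω i]
                = (List.range (i+1)).map ω := by
              calc (G.playPair σ.1 (comb G B W) s i).1 ++ [ω i]
                  = (G.playPair σ.1 (comb G B W) s (i+1)).1 := rfl
                _ = (List.range (i+1)).map ω := playPair_fst G _ _ s (i+1)
            have hcond : ¬ ∃ j, ((List.range (i+1)).map ω).getD j (ω i) ∈ W := by
              rintro ⟨j, hj⟩
              by_cases hjlt : j < i + 1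
              · rw [List.getD_eq_getElem _ _ (by simpa using hjlt)] at hj
                simp only [List.getElem_map, List.getElem_range] at hj
                exact hWc j (Nat.lt_succ_iff.mp hjlt) hj
              · rw [List.getD_eq_default _ _ (by simpa using Nat.le_of_not_lt hjlt)] at hj
                exact hiW hj
            have hcond' : ¬ ∃ j,
                ((G.playPair σ.1 (comb G B W) s i).1 ++ [ω i]).getD j (ω i) ∈ W := by
              rw [hL]; exact hcond
            rw [comb, dif_neg hcond']
            exact attrMove_spec G W hA hiW h1
        right
        have hle := rnk_le G W key
        refine ⟨Set.mem_iUnion.mpr ⟨_, key⟩, ?_⟩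
        omega
  rcases inv n with ⟨k, _, h⟩ | ⟨hA, hr⟩
  · exact ⟨k, h⟩
  · have h0 : rnk G W (ω n) = 0 := by omega
    have := mem_rnk G W hA
    rw [h0] at this
    exact ⟨n, this⟩

end AttrAux

/-- the player-2 attractor of a subset of player 2's co-Büchi
winning set is again contained in that winning set. -/
theorem attr2_W2_coBuchi {S : Type u} [Finite S] (G : GameGraph S)
    (B W : Set S) (hW : W ⊆ G.W2 (coBuchi Bᶜ)) :
    G.Attr2 W ⊆ G.W2 (coBuchi Bᶜ) := by
  intro s hs
  refine ⟨⟨comb G B W, comb_mem G B W⟩, fun σ => ?_⟩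
  show G.play σ.1 (comb G B W) s ∈ coBuchi Bᶜ
  set ω := G.play σ.1 (comb G B W) s with hω
  have hreach : ∃ k, ω k ∈ W := comb_reach G B W σ hs
  set k := Nat.find hreach with hk
  have hkW : ω k ∈ W := Nat.find_spec hreach
  have hmin : ∀ j < k, ω j ∉ W := fun j hj => Nat.find_min hreach hj
  set H0 := (G.playPair σ.1 (comb G B W) s k).1 with hH0
  have hH0' : H0 = (List.range k).map ω := playPair_fst G _ _ s k
  have hH0len : H0.length = k := by rw [hH0']; simp
  set t := ω k with ht
  set σ' : List S → S → S := fun h u => σ.1 (H0 ++ h) u with hσ'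
  have hσ'mem : ∀ h u, σ' h u ∈ G.E u := fun h u => σ.2 (H0 ++ h) u
  set π' := (Fwin G B t).1 with hπ'
  have corr : ∀ j,
      (G.playPair σ.1 (comb G B W) s (k + j)).1 = H0 ++ (G.playPair σ' π' t j).1 ∧
      (G.playPair σ.1 (comb G B W) s (k + j)).2 = (G.playPair σ' π' t j).2 := by
    intro j
    induction j with
    | zero =>
        constructor
        · show (G.playPair σ.1 (comb G B W) s k).1 = H0 ++ []
          rw [List.append_nil, hH0]
        · show (G.playPair σ.1 (comb G B W) s k).2 = t
          rw [ht]
          rfl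
    | succ j ih =>
        obtain ⟨ih1, ih2⟩ := ih
        have key2 : (G.playPair σ.1 (comb G B W) s (k + j + 1)).2
            = (G.playPair σ' π' t (j + 1)).2 := by
          show (if (G.playPair σ.1 (comb G B W) s (k + j)).2 ∈ G.S1
              then σ.1 (G.playPair σ.1 (comb G B W) s (k + j)).1
                (G.playPair σ.1 (comb G B W) s (k + j)).2
              else comb G B W (G.playPair σ.1 (comb G B W) s (k + j)).1
                (G.playPair σ.1 (comb G B W) s (k + j)).2)
            = (if (G.playPair σ' π' t j).2 ∈ G.S1
              then σ' (G.playPair σ' π' t j).1 (G.playPair σ' π' t j).2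
              else π' (G.playPair σ' π' t j).1 (G.playPair σ' π' t j).2)
          rw [ih1, ih2]
          by_cases hQ : (G.playPair σ' π' t j).2 ∈ G.S1
          · rw [if_pos hQ, if_pos hQ, hσ']
          · rw [if_neg hQ, if_neg hQ]
            -- comb applied to the shifted history simulates the winning strategy
            have hQ1 : (G.playPair σ' π' t j).1 ++ [(G.playPair σ' π' t j).2]
                = (List.range (j+1)).map (G.play σ' π' t) := by
              calc (G.playPair σ' π' t j).1 ++ [(G.playPair σ' π' t j).2]
                  = (G.playPair σ' π' t (j+1)).1 := rfl
                _ = _ := playPair_fst G σ' π' t (j+1)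
            simp only [comb, List.append_assoc]
            simp only [hQ1]
            have hgetk : (H0 ++ (List.range (j+1)).map (G.play σ' π' t)).getD k
                (G.playPair σ' π' t j).2 = t := by
              calc (H0 ++ (List.range (j+1)).map (G.play σ' π' t)).getD k
                    (G.playPair σ' π' t j).2
                  = G.play σ' π' t 0 := by
                    rw [← hH0len]
                    exact getD_append_map_at H0 _ (Nat.succ_pos j)
                _ = t := rfl
            have hex : ∃ i, (H0 ++ (List.range (j+1)).map (G.play σ' π' t)).getD i
                (G.playPair σ' π' t j).2 ∈ W := ⟨k, by rw [hgetk]; exact hkW⟩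
            rw [dif_pos hex]
            have hfind : Nat.find hex = k := by
              rw [Nat.find_eq_iff]
              refine ⟨by rw [hgetk]; exact hkW, fun i hi hWi => ?_⟩
              rw [hH0', getD_append_map_lt _ _ hi] at hWi
              exact hmin i hi hWi
            rw [hfind, hgetk, ← hH0len, List.drop_left, hπ']
        refine ⟨?_, key2⟩
        show (G.playPair σ.1 (comb G B W) s (k + j)).1
            ++ [(G.playPair σ.1 (comb G B W) s (k + j)).2]
          = H0 ++ ((G.playPair σ' π' t j).1 ++ [(G.playPair σ' π' t j).2])
        rw [ih1, ih2, List.append_assoc]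
  have corr2 : ∀ j, ω (k + j) = G.play σ' π' t j := fun j => (corr j).2
  have hwin : G.play σ' π' t ∈ coBuchi Bᶜ := by
    have := Fwin_spec G B (hW hkW) ⟨σ', hσ'mem⟩
    exact this
  intro x hx
  apply hwin
  intro N
  obtain ⟨m, hm1, hm2⟩ := hx (N + k)
  refine ⟨m - k, by omega, ?_⟩
  rw [← corr2 (m - k), show k + (m - k) = m by omega]
  exact hm2
end

section
/- Let G be a finite game graph with Büchi set B. Suppose S \ Attr1(B,G) = ∅, i.e., player 1 can force reaching B from every state. Then every state is winning for player 1 for the Büchi objective: W1(Buchi(B)) = S. -/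
open Classical

universe u

open GameGraph

section Aux

variable {S : Type u} (G : GameGraph S) (B : Set S)

lemma attrSeq1_mono_s13 : ∀ {m n : ℕ}, m ≤ n → G.AttrSeq1 B m ⊆ G.AttrSeq1 B n := by
  intro m n hmn
  induction n with
  | zero => simp at hmn; subst hmn; exact subset_rfl
  | succ n ih =>
    rcases Nat.lt_or_ge m (n+1) with hlt | hge
    · exact (ih (Nat.lt_succ_iff.mp hlt)).trans (by intro x hx; exact Or.inl (Or.inl hx))
    · have : m = n+1 := le_antisymm hmn hge
      subst this; exact subset_rfl

variable (hall : ∀ s : S, ∃ n, s ∈ G.AttrSeq1 B n)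

noncomputable def myRank (s : S) : ℕ := Nat.find (hall s)

lemma mem_myRank (s : S) : s ∈ G.AttrSeq1 B (myRank G B hall s) := Nat.find_spec (hall s)

lemma myRank_le {s : S} {n : ℕ} (hn : s ∈ G.AttrSeq1 B n) : myRank G B hall s ≤ n :=
  Nat.find_min' (hall s) hn

noncomputable def myF (s : S) : S :=
  if h' : (G.E s ∩ G.AttrSeq1 B (myRank G B hall s - 1)).Nonempty then h'.choose
  else (G.succ_nonempty s).choose

lemma myF_mem (s : S) : myF G B hall s ∈ G.E s := by
  unfold myF
  split
  · next h' => exact h'.choose_spec.1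
  · exact (G.succ_nonempty s).choose_spec

lemma step_lemma {s : S} (hs : s ∉ B) :
    (s ∈ G.S1 → myRank G B hall (myF G B hall s) < myRank G B hall s) ∧
    (s ∉ G.S1 → ∀ t ∈ G.E s, myRank G B hall t < myRank G B hall s) := by
  have hn0 : myRank G B hall s ≠ 0 := by
    intro h0
    have := mem_myRank G B hall s
    rw [h0] at this
    exact hs this
  obtain ⟨m, hm⟩ := Nat.exists_eq_succ_of_ne_zero hn0
  have hmem : s ∈ G.AttrSeq1 B (m+1) := by
    have := mem_myRank G B hall s; rwa [hm] at this
  have hnot : s ∉ G.AttrSeq1 B m := by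
    have hlt : m < myRank G B hall s := by omega
    exact Nat.find_min (hall s) hlt
  have hmem' : s ∈ G.AttrSeq1 B m ∪ { t | t ∈ G.S1 ∧ (G.E t ∩ G.AttrSeq1 B m).Nonempty }
      ∪ { t | t ∉ G.S1 ∧ G.E t ⊆ G.AttrSeq1 B m } := hmem
  rcases hmem' with (hx | hx) | hx
  · exact absurd hx hnot
  · constructor
    · intro _
      have hne : (G.E s ∩ G.AttrSeq1 B (myRank G B hall s - 1)).Nonempty := by
        rw [hm]; simpa using hx.2
      have hmemF : myF G B hall s ∈ G.AttrSeq1 B (myRank G B hall s - 1) := by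
        unfold myF
        rw [dif_pos hne]
        exact hne.choose_spec.2
      have := myRank_le G B hall hmemF
      omega
    · intro hns _ _; exact absurd hx.1 hns
  · constructor
    · intro hs1; exact absurd hs1 hx.1
    · intro _ t ht
      have := myRank_le G B hall (hx.2 ht)
      omega

end Aux

/-- if player 1 can force reaching `B` from every state, then
every state is winning for player 1 for the Büchi objective. -/
theorem attr1_full_W1_buchi {S : Type u} [Finite S] (G : GameGraph S)
    (B : Set S) (h : (G.Attr1 B)ᶜ = ∅) :
    G.W1 (Buchi B) = Set.univ := by
  have hall : ∀ s : S, ∃ n, s ∈ G.AttrSeq1 B n := by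
    intro s
    have : s ∈ G.Attr1 B := by
      by_contra hc
      have : s ∈ (G.Attr1 B)ᶜ := hc
      rw [h] at this; exact this
    simpa [GameGraph.Attr1, Set.mem_iUnion] using this
  ext s
  simp only [Set.mem_univ, iff_true]
  refine ⟨⟨GameGraph.liftML (myF G B hall), fun _ t => myF_mem G B hall t⟩, ?_⟩
  intro π
  set ω := G.play (GameGraph.liftML (myF G B hall)) π.1 s with hω
  -- basic step facts about the play
  have hstep : ∀ k, ω (k+1) ∈ G.E (ω k) ∧ (ω k ∈ G.S1 → ω (k+1) = myF G B hall (ω k)) := by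
    intro k
    have hply : ω (k+1) = (if ω k ∈ G.S1 then GameGraph.liftML (myF G B hall)
        (G.playPair (GameGraph.liftML (myF G B hall)) π.1 s k).1 (ω k)
        else π.1 (G.playPair (GameGraph.liftML (myF G B hall)) π.1 s k).1 (ω k)) := by
      simp only [hω, GameGraph.play, GameGraph.playPair]
    constructor
    · rw [hply]
      split
      · exact myF_mem G B hall (ω k)
      · exact π.2 _ _
    · intro h1
      rw [hply, if_pos h1]
      rfl
  have hrankstep : ∀ k, ω k ∉ B → myRank G B hall (ω (k+1)) < myRank G B hall (ω k) := by
    intro k hk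
    obtain ⟨hE, hS1⟩ := hstep k
    obtain ⟨h1, h2⟩ := step_lemma G B hall hk
    by_cases hc : ω k ∈ G.S1
    · rw [hS1 hc]; exact h1 hc
    · exact h2 hc _ hE
  -- player 1 reaches B from every position
  have reach : ∀ r k, myRank G B hall (ω k) ≤ r → ∃ m, ω (k+m) ∈ B := by
    intro r
    induction r with
    | zero =>
      intro k hk
      refine ⟨0, ?_⟩
      have h0 : myRank G B hall (ω k) = 0 := Nat.le_zero.mp hk
      have hmem := mem_myRank G B hall (ω k)
      rw [h0] at hmem
      simpa [GameGraph.AttrSeq1] using hmem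
    | succ r ih =>
      intro k hk
      by_cases hB : ω k ∈ B
      · exact ⟨0, hB⟩
      · have hlt := hrankstep k hB
        obtain ⟨m, hm⟩ := ih (k+1) (by omega)
        exact ⟨m+1, by rw [show k + (m+1) = k + 1 + m by omega]; exact hm⟩
  have reach' : ∀ k, ∃ m, k ≤ m ∧ ω m ∈ B := by
    intro k
    obtain ⟨m, hm⟩ := reach (myRank G B hall (ω k)) k le_rfl
    exact ⟨k + m, by omega, hm⟩
  -- pigeonhole over finite S
  set K : Set ℕ := {k | ω k ∈ B} with hK
  have hKinf : K.Infinite := by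
    rw [Set.infinite_coe_iff.symm]
    rw [Set.infinite_coe_iff]
    apply Set.infinite_of_not_bddAbove
    rintro ⟨N, hN⟩
    obtain ⟨m, hm1, hm2⟩ := reach' (N+1)
    have := hN hm2
    omega
  have : ∃ b : S, {k ∈ K | ω k = b}.Infinite := by
    by_contra hc
    push_neg at hc
    replace hc : ∀ b : S, {k ∈ K | ω k = b}.Finite := hc
    have : K ⊆ ⋃ b ∈ (Set.univ : Set S), {k ∈ K | ω k = b} := by
      intro k hk
      exact Set.mem_biUnion (Set.mem_univ (ω k)) ⟨hk, rfl⟩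
    have hfin : (⋃ b ∈ (Set.univ : Set S), {k ∈ K | ω k = b}).Finite :=
      Set.Finite.biUnion Set.finite_univ (fun b _ => hc b)
    exact hKinf (hfin.subset this)
  obtain ⟨b, hb⟩ := this
  have hbB : b ∈ B := by
    obtain ⟨k, hk1, hk2⟩ := hb.nonempty
    rw [← hk2]; exact hk1
  refine ⟨b, ?_, hbB⟩
  intro N
  obtain ⟨k, hk, hkN⟩ := hb.exists_gt N
  exact ⟨k, le_of_lt hkN, hk.2⟩
end

section
/- In the improved algorithm's forward-search iteration, let R be the set of states explored by the truncated BFS from the auxiliary source, F ⊆ R the BFS frontier, T = { s ∈ S2 ∩ F | E(s) ∩ R = ∅ } ∪ (S1 ∩ F), and A = Attr1((R ∩ B) ∪ T, G↾R). Then R \ A is a closed set for player 1 in G and (R \ A) ∩ B = ∅; consequently R \ A ⊆ W2(coBuchi(S\B)). -/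
open Classical

universe u

namespace GameGraph

variable {S : Type u} (G : GameGraph S)

lemma attrSeq1In_mono (X U : Set S) : Monotone (G.AttrSeq1In X U) := by
  apply monotone_nat_of_le_succ
  intro n s hs
  exact Or.inl (Or.inl hs)

lemma mem_attr1In_base {X U : Set S} {s : S} (h : s ∈ U) : s ∈ G.Attr1In X U :=
  Set.mem_iUnion.2 ⟨0, h⟩

lemma mem_attr1In_S1 {X U : Set S} {s : S} (hX : s ∈ X) (h1 : s ∈ G.S1)
    (h : (G.E s ∩ G.Attr1In X U).Nonempty) : s ∈ G.Attr1In X U := by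
  obtain ⟨t, ht, htA⟩ := h
  obtain ⟨n, hn⟩ := Set.mem_iUnion.1 htA
  exact Set.mem_iUnion.2 ⟨n + 1, Or.inl (Or.inr ⟨hX, h1, t, ht, hn⟩)⟩

lemma finite_subset_iUnion {α : Type*} {W : Set α} (hW : W.Finite) {f : ℕ → Set α}
    (hf : Monotone f) (h : W ⊆ ⋃ n, f n) : ∃ n, W ⊆ f n := by
  refine Set.Finite.induction_on (motive := fun W _ => W ⊆ (⋃ n, f n) → ∃ n, W ⊆ f n) W hW
    (fun _ => ⟨0, by simp⟩) ?_ h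
  intro a s ha hs ih hsub
  obtain ⟨n, hn⟩ := ih (fun x hx => hsub (Set.mem_insert_of_mem a hx))
  obtain ⟨m, hm⟩ := Set.mem_iUnion.1 (hsub (Set.mem_insert a s))
  refine ⟨max n m, ?_⟩
  rintro x (rfl | hx)
  · exact hf (le_max_right n m) hm
  · exact hf (le_max_left n m) (hn hx)

lemma mem_attr1In_S2 [Finite S] {X U : Set S} {s : S} (hX : s ∈ X) (h1 : s ∉ G.S1)
    (h : G.E s ∩ X ⊆ G.Attr1In X U) : s ∈ G.Attr1In X U := by
  obtain ⟨n, hn⟩ := finite_subset_iUnion (Set.toFinite _) (G.attrSeq1In_mono X U) h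
  exact Set.mem_iUnion.2 ⟨n + 1, Or.inr ⟨hX, h1, hn⟩⟩

end GameGraph

open GameGraph

/-- in the forward-search step of the improved algorithm, with
explored region `R`, frontier `F`, `T` and `A = Attr1((R∩B) ∪ T, G↾R)`, the
set `R \ A` is player-1 closed, disjoint from `B`, and hence contained in
`W2(coBuchi (S\B))`. -/
theorem forward_search_sound {S : Type u} [Finite S] (G : GameGraph S)
    (B R F : Set S) (hF : F ⊆ R) (hR : ∀ s ∈ R \ F, G.E s ⊆ R) :
    let T : Set S := { s | s ∉ G.S1 ∧ s ∈ F ∧ G.E s ∩ R = ∅ } ∪ (G.S1 ∩ F)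
    let A : Set S := G.Attr1In R ((R ∩ B) ∪ T)
    G.Closed1 (R \ A) ∧ (R \ A) ∩ B = ∅ ∧ R \ A ⊆ G.W2 (coBuchi Bᶜ) := by
  intro T A
  have hTA : T ⊆ A := fun s hs => G.mem_attr1In_base (Or.inr hs)
  have hBA : R ∩ B ⊆ A := fun s hs => G.mem_attr1In_base (Or.inl hs)
  have hcl : G.Closed1 (R \ A) := by
    constructor
    · rintro s ⟨⟨hsR, hsA⟩, hs1⟩ t ht
      have hsF : s ∉ F := fun hsF => hsA (hTA (Or.inr ⟨hs1, hsF⟩))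
      have htR : t ∈ R := hR s ⟨hsR, hsF⟩ ht
      exact ⟨htR, fun htA => hsA (G.mem_attr1In_S1 hsR hs1 ⟨t, ht, htA⟩)⟩
    · rintro s ⟨⟨hsR, hsA⟩, hs1⟩
      have hsub : ¬ (G.E s ∩ R ⊆ A) := fun h => hsA (G.mem_attr1In_S2 hsR hs1 h)
      obtain ⟨t, ht, htA⟩ := Set.not_subset.1 hsub
      exact ⟨t, ht.1, ht.2, htA⟩
  have hdisj : (R \ A) ∩ B = ∅ := by
    ext s
    simp only [Set.mem_inter_iff, Set.mem_diff, Set.mem_empty_iff_false, iff_false]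
    rintro ⟨⟨hsR, hsA⟩, hsB⟩
    exact hsA (hBA ⟨hsR, hsB⟩)
  refine ⟨hcl, hdisj, ?_⟩
  intro s hs
  classical
  let π0 : List S → S → S := fun _ t =>
    if h : (G.E t ∩ (R \ A)).Nonempty then h.choose else (G.succ_nonempty t).choose
  have hπ0 : ∀ h t, π0 h t ∈ G.E t := by
    intro h t
    simp only [π0]
    split
    · next h2 => exact h2.choose_spec.1
    · exact (G.succ_nonempty t).choose_spec
  have hπD : ∀ (h : List S) (t : S), (G.E t ∩ (R \ A)).Nonempty → π0 h t ∈ R \ A := by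
    intro h t hne
    simp only [π0, dif_pos hne]
    exact hne.choose_spec.2
  refine ⟨⟨π0, hπ0⟩, fun σ => ?_⟩
  have key : ∀ n, G.play σ.1 π0 s n ∈ R \ A := by
    intro n
    induction n with
    | zero => exact hs
    | succ n ih =>
      have hstep : G.play σ.1 π0 s (n+1) =
          (if (G.playPair σ.1 π0 s n).2 ∈ G.S1
            then σ.1 (G.playPair σ.1 π0 s n).1 (G.playPair σ.1 π0 s n).2
            else π0 (G.playPair σ.1 π0 s n).1 (G.playPair σ.1 π0 s n).2) := rfl
      rw [hstep]
      by_cases h1 : (G.playPair σ.1 π0 s n).2 ∈ G.S1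
      · rw [if_pos h1]
        exact hcl.1 _ ⟨ih, h1⟩ (σ.2 _ _)
      · rw [if_neg h1]
        exact hπD (G.playPair σ.1 π0 s n).1 _ (hcl.2 _ ⟨ih, h1⟩)
  intro t ht
  obtain ⟨k, -, hk⟩ := ht 0
  intro hB
  have hmem : t ∈ (R \ A) ∩ B := ⟨hk ▸ key k, hB⟩
  rw [hdisj] at hmem
  exact hmem
end

section
/- Consider the family of game graphs G_n consisting of gadgets H(0),...,H(n), where H(i) has a player-1 state t_i and a player-2 state w_i, with edges E(w_i) = {t_i, t_{i+1}} for i < n, E(w_n) = {t_n}, E(t_i) = {t_i, w_{i-1}} for i > 0, E(t_0) = {t_0}, and Büchi set B = { w_i | 0 ≤ i ≤ n }. Then the winning set of player 2 for coBuchi(S\B) is the entire state space: W2(coBuchi(S\B)) = S, and in particular player 1 wins Buchi(B) from no state. -/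
open Classical

universe u

open GameGraph

/-- Edges of the gadget family: `t i = Sum.inl i` (player 1),
`w i = Sum.inr i` (player 2); `E (w i) = {t i, t (i+1)}` (just `{t n}`-style
when `i = n`), `E (t i) = {t i, w (i-1)}` (just `{t 0}` when `i = 0`). -/
def gadgetE (n : ℕ) : (Fin (n+1) ⊕ Fin (n+1)) → Set (Fin (n+1) ⊕ Fin (n+1))
  | Sum.inl i => {Sum.inl i} ∪ { x | ∃ j : Fin (n+1), x = Sum.inr j ∧ (j : ℕ) + 1 = (i : ℕ) }
  | Sum.inr i => {Sum.inl i} ∪ { x | ∃ j : Fin (n+1), x = Sum.inl j ∧ (j : ℕ) = (i : ℕ) + 1 }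

/-- The gadget game graph consisting of `H(0), …, H(n)`. -/
def gadgetGame (n : ℕ) : GameGraph (Fin (n+1) ⊕ Fin (n+1)) where
  E := gadgetE n
  S1 := Set.range Sum.inl
  succ_nonempty := by
    rintro (i | i) <;> exact ⟨Sum.inl i, Or.inl rfl⟩


namespace Gadget

variable {n : ℕ}

/-- Player 2's memoryless strategy: always move to `t i`. -/
def π2 : List (Fin (n+1) ⊕ Fin (n+1)) → (Fin (n+1) ⊕ Fin (n+1)) → (Fin (n+1) ⊕ Fin (n+1)) :=
  fun _ s => Sum.inl (s.elim id id)

lemma π2_mem (h : List (Fin (n+1) ⊕ Fin (n+1))) (s : Fin (n+1) ⊕ Fin (n+1)) :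
    π2 h s ∈ (gadgetGame n).E s := by
  rcases s with i | i <;> exact Or.inl rfl

/-- A measure which decreases strictly when leaving a `w` state. -/
def μ : (Fin (n+1) ⊕ Fin (n+1)) → ℕ
  | Sum.inl i => 2 * i
  | Sum.inr i => 2 * i + 1

lemma step (σ : (gadgetGame n).Strat) (s : Fin (n+1) ⊕ Fin (n+1)) (k : ℕ) :
    μ ((gadgetGame n).play σ.1 π2 s (k+1)) ≤ μ ((gadgetGame n).play σ.1 π2 s k) ∧
    (((gadgetGame n).play σ.1 π2 s k) ∈ Set.range (Sum.inr : Fin (n+1) → _) →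
      μ ((gadgetGame n).play σ.1 π2 s (k+1)) < μ ((gadgetGame n).play σ.1 π2 s k)) := by
  have hplay : (gadgetGame n).play σ.1 π2 s (k+1) =
      (if ((gadgetGame n).playPair σ.1 π2 s k).2 ∈ (gadgetGame n).S1
        then σ.1 ((gadgetGame n).playPair σ.1 π2 s k).1 ((gadgetGame n).playPair σ.1 π2 s k).2
        else π2 ((gadgetGame n).playPair σ.1 π2 s k).1 ((gadgetGame n).playPair σ.1 π2 s k).2) := rfl
  have hcur : (gadgetGame n).play σ.1 π2 s k = ((gadgetGame n).playPair σ.1 π2 s k).2 := rfl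
  rcases hc : ((gadgetGame n).playPair σ.1 π2 s k).2 with i | i
  · -- player 1 state t i
    have hS1 : ((gadgetGame n).playPair σ.1 π2 s k).2 ∈ (gadgetGame n).S1 := by
      rw [hc]; exact ⟨i, rfl⟩
    have hnext : (gadgetGame n).play σ.1 π2 s (k+1)
        = σ.1 ((gadgetGame n).playPair σ.1 π2 s k).1 ((gadgetGame n).playPair σ.1 π2 s k).2 := by
      rw [hplay, if_pos hS1]
    have hmem := σ.2 ((gadgetGame n).playPair σ.1 π2 s k).1 ((gadgetGame n).playPair σ.1 π2 s k).2
    rw [hc] at hmem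
    constructor
    · rcases hmem with h1 | ⟨j, hj, hj1⟩
      · rw [hcur, hc, hnext, hc, h1]
      · rw [hcur, hc, hnext, hc, hj]
        simp only [μ]; omega
    · intro hr
      rw [hcur, hc] at hr
      rcases hr with ⟨j, hj⟩; exact absurd hj (by simp)
  · -- player 2 state w i
    have hS1 : ((gadgetGame n).playPair σ.1 π2 s k).2 ∉ (gadgetGame n).S1 := by
      rw [hc]; rintro ⟨j, hj⟩; exact absurd hj (by simp)
    have hnext : (gadgetGame n).play σ.1 π2 s (k+1) = Sum.inl i := by
      rw [hplay, if_neg hS1, hc]; rfl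
    rw [hcur, hc, hnext]
    simp only [μ]
    constructor
    · omega
    · intro _; omega

lemma wins (s : Fin (n+1) ⊕ Fin (n+1)) (σ : (gadgetGame n).Strat) :
    (gadgetGame n).play σ.1 π2 s ∈
      coBuchi (Set.range (Sum.inr : Fin (n+1) → Fin (n+1) ⊕ Fin (n+1)))ᶜ := by
  set f : ℕ → ℕ := fun k => μ ((gadgetGame n).play σ.1 π2 s k) with hf
  have hanti : Antitone f := antitone_nat_of_succ_le (fun k => (step σ s k).1)
  have hne : (Set.range f).Nonempty := ⟨f 0, 0, rfl⟩
  obtain ⟨N, hN⟩ := Nat.sInf_mem hne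
  have hconst : ∀ k, N ≤ k → f k = sInf (Set.range f) := by
    intro k hk
    have h1 : f k ≤ f N := hanti hk
    have h2 : sInf (Set.range f) ≤ f k := Nat.sInf_le ⟨k, rfl⟩
    omega
  intro x hx
  by_contra hmem
  simp only [Set.mem_compl_iff, not_not] at hmem
  obtain ⟨k, hk, hxk⟩ := hx N
  have hlt : f (k+1) < f k := (step σ s k).2 (by rw [hxk]; exact hmem)
  have e1 := hconst k hk
  have e2 := hconst (k+1) (by omega)
  omega

end Gadget

/-- in the gadget family with Büchi set `B = {w i}`, player 2
wins `coBuchi (S \ B)` from every state, and player 1 wins `Buchi B` from no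
state. -/
theorem gadget_player2_wins (n : ℕ) :
    (gadgetGame n).W2 (coBuchi (Set.range (Sum.inr : Fin (n+1) → Fin (n+1) ⊕ Fin (n+1)))ᶜ)
      = Set.univ ∧
    (gadgetGame n).W1 (Buchi (Set.range (Sum.inr : Fin (n+1) → Fin (n+1) ⊕ Fin (n+1))))
      = ∅ := by
  constructor
  · ext s
    simp only [Set.mem_univ, iff_true]
    exact ⟨⟨Gadget.π2, Gadget.π2_mem⟩, fun σ => Gadget.wins s σ⟩
  · ext s
    simp only [Set.mem_empty_iff_false, iff_false]
    rintro ⟨σ, hσ⟩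
    have h1 := hσ ⟨Gadget.π2, Gadget.π2_mem⟩
    have h2 := Gadget.wins s σ
    obtain ⟨x, hx1, hx2⟩ := h1
    exact h2 hx1 hx2
end
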